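/- Let x be a fixed vector in R^n and let e1, e2 be independent zero-mean random vectors in R^n, with noisy observations y1 = x + e1 and y2 = x + e2, where e2 is independent of y1. Then for any measurable function g: R^n -> R^n with E[||g(y1)||^2] < infinity, the expected squared error against the second noisy observation equals the expected squared error against the clean signal plus the noise variance: E[||y1 - g(y1) - y2||^2] = E[||y1 - g(y1) - x||^2] + E[||e2||^2]. -/

import Mathlib

open MeasureTheory

/-- Noise-to-noise identity: the expected squared error against a second independent
zero-mean noisy observation equals the expected squared error against the clean signal
plus the noise variance. -/
theorem noise2noise_identity {Ω : Type*} [MeasurableSpace Ω] {μ : Measure Ω}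
    [IsProbabilityMeasure μ] {n : ℕ} (x : EuclideanSpace ℝ (Fin n))
    (e1 e2 : Ω → EuclideanSpace ℝ (Fin n))
    (he1 : MemLp e1 2 μ) (he2 : MemLp e2 2 μ)
    (hindep : ProbabilityTheory.IndepFun e1 e2 μ)
    (hmean2 : ∫ ω, e2 ω ∂μ = 0)
    (y1 y2 : Ω → EuclideanSpace ℝ (Fin n))
    (hy1 : y1 = fun ω => x + e1 ω) (hy2 : y2 = fun ω => x + e2 ω)
    (g : EuclideanSpace ℝ (Fin n) → EuclideanSpace ℝ (Fin n))
    (hg : Measurable g) (hg2 : MemLp (fun ω => g (y1 ω)) 2 μ) :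
    ∫ ω, ‖y1 ω - g (y1 ω) - y2 ω‖ ^ 2 ∂μ
      = (∫ ω, ‖y1 ω - g (y1 ω) - x‖ ^ 2 ∂μ) + ∫ ω, ‖e2 ω‖ ^ 2 ∂μ := by
  subst hy1 hy2
  set f : Ω → EuclideanSpace ℝ (Fin n) := fun ω => e1 ω - g (x + e1 ω) with hf_def
  have hf : MemLp f 2 μ := he1.sub hg2
  -- coordinate functions are in L²
  have hfi : ∀ i : Fin n, MemLp (fun ω => f ω i) 2 μ := by
    intro i
    have := (EuclideanSpace.proj (𝕜 := ℝ) i).comp_memLp' hf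
    exact this
  have he2i : ∀ i : Fin n, MemLp (fun ω => e2 ω i) 2 μ := by
    intro i
    have := (EuclideanSpace.proj (𝕜 := ℝ) i).comp_memLp' he2
    exact this
  -- product of two L² real functions is integrable
  have hprod : ∀ i : Fin n, Integrable (fun ω => f ω i * e2 ω i) μ := by
    intro i
    have := L2.integrable_inner (𝕜 := ℝ) ((hfi i).toLp _) ((he2i i).toLp _)
    refine this.congr ?_
    filter_upwards [(hfi i).coeFn_toLp, (he2i i).coeFn_toLp] with ω h1 h2
    simp [h1, h2, real_inner_comm, RCLike.inner_apply, mul_comm]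
  -- the inner product term has zero integral, by independence
  have hinner_int : Integrable (fun ω => (inner ℝ (f ω) (e2 ω) : ℝ)) μ := by
    refine (L2.integrable_inner (𝕜 := ℝ) (hf.toLp f) (he2.toLp e2)).congr ?_
    filter_upwards [hf.coeFn_toLp, he2.coeFn_toLp] with ω h1 h2
    rw [h1, h2]
  have hinner_zero : ∫ ω, (inner ℝ (f ω) (e2 ω) : ℝ) ∂μ = 0 := by
    have hco : ∀ i : Fin n, ∫ ω, f ω i * e2 ω i ∂μ = 0 := by
      intro i
      have hφ : Measurable fun v : EuclideanSpace ℝ (Fin n) =>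
          (v - g (x + v)) i := by
        exact (EuclideanSpace.proj (𝕜 := ℝ) i).continuous.measurable.comp
          (measurable_id.sub (hg.comp (measurable_const.add measurable_id)))
      have hψ : Measurable fun v : EuclideanSpace ℝ (Fin n) => v i :=
        (EuclideanSpace.proj (𝕜 := ℝ) i).continuous.measurable
      have hind : ProbabilityTheory.IndepFun (fun ω => f ω i) (fun ω => e2 ω i) μ :=
        hindep.comp hφ hψ
      have he2iz : ∫ ω, e2 ω i ∂μ = 0 := by
        have := (EuclideanSpace.proj (𝕜 := ℝ) i).integral_comp_comm
          (he2.integrable (by norm_num))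
        simp only [hmean2] at this
        simpa using this
      have := hind.integral_mul_eq_mul_integral (hfi i).aestronglyMeasurable (he2i i).aestronglyMeasurable
      simpa [he2iz, Pi.mul_apply] using this
    calc ∫ ω, (inner ℝ (f ω) (e2 ω) : ℝ) ∂μ
        = ∫ ω, ∑ i : Fin n, f ω i * e2 ω i ∂μ := by
          refine integral_congr_ae (Filter.Eventually.of_forall fun ω => ?_)
          simp [PiLp.inner_apply, RCLike.inner_apply, mul_comm]
      _ = 0 := by
          rw [integral_finset_sum _ (fun i _ => hprod i)]
          exact Finset.sum_eq_zero fun i _ => hco i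
  -- integrability of the square terms
  have hfsq : Integrable (fun ω => ‖f ω‖ ^ 2) μ := hf.norm.integrable_sq
  have he2sq : Integrable (fun ω => ‖e2 ω‖ ^ 2) μ := he2.norm.integrable_sq
  have h1 : Integrable (fun ω => ‖f ω‖ ^ 2 - 2 * (inner ℝ (f ω) (e2 ω) : ℝ)) μ :=
    hfsq.sub (hinner_int.const_mul 2)
  have h2 : Integrable (fun ω => 2 * (inner ℝ (f ω) (e2 ω) : ℝ)) μ :=
    hinner_int.const_mul 2
  have hptwise : ∀ ω : Ω,
      ‖(x + e1 ω) - g (x + e1 ω) - (x + e2 ω)‖ ^ 2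
        = ‖f ω‖ ^ 2 - 2 * (inner ℝ (f ω) (e2 ω) : ℝ) + ‖e2 ω‖ ^ 2 := by
    intro ω
    have hsub : (x + e1 ω) - g (x + e1 ω) - (x + e2 ω) = f ω - e2 ω := by
      simp only [hf_def]; abel
    rw [hsub, norm_sub_sq_real]
  have hLHS : ∫ ω, ‖(x + e1 ω) - g (x + e1 ω) - (x + e2 ω)‖ ^ 2 ∂μ
      = ∫ ω, ((‖f ω‖ ^ 2 - 2 * (inner ℝ (f ω) (e2 ω) : ℝ)) + ‖e2 ω‖ ^ 2) ∂μ :=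
    integral_congr_ae (Filter.Eventually.of_forall hptwise)
  have hRHS : ∀ ω : Ω, ‖(x + e1 ω) - g (x + e1 ω) - x‖ ^ 2 = ‖f ω‖ ^ 2 := by
    intro ω
    congr 1
    simp only [hf_def]; abel
  simp only [hLHS]
  rw [integral_add h1 he2sq, integral_sub hfsq h2, integral_const_mul, hinner_zero]
  simp only [mul_zero, sub_zero]
  congr 1
  exact (integral_congr_ae (Filter.Eventually.of_forall fun ω => (hRHS ω).symm))
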